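/- arXiv:2503.15097 — 3 statements merged into one kernel-verified Lean document; each statement's English description precedes it below -/
import Mathlib

section
/- Let n ≥ 2, for each j = 1, …, n let (l^j, r^j) be a Cantor-set construction with density ratio at least x_j > 0, and assume Σ_{j=1}^n x_j/(x_j + 1) ≥ 1. Let i_1, …, i_n ≥ 1 be indices such that the intervals I_{i_1}^1, …, I_{i_n}^n are comparable, i.e. for all j, k: length(I_{i_j}^j) ≥ (x_j/(x_j + 1))·(x_k + 1)·length(G_{i_k}^k). Then for every k: Σ_{j=1}^n I_{i_j}^j = (Σ_{j≠k} I_{i_j}^j + I_{2i_k}^k) ∪ (Σ_{j≠k} I_{i_j}^j + I_{2i_k+1}^k), where sums of intervals are pointwise. -/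
open Pointwise

structure CantorConstr where
  l : ℕ → ℝ
  r : ℕ → ℝ
  lt : ∀ i : ℕ, 1 ≤ i → l i < r i
  left_eq : ∀ i : ℕ, 1 ≤ i → l (2 * i) = l i
  right_eq : ∀ i : ℕ, 1 ≤ i → r (2 * i + 1) = r i
  gap_lt : ∀ i : ℕ, 1 ≤ i → r (2 * i) < l (2 * i + 1)

/-- The Cantor set associated to a construction: the initial interval minus all the gaps. -/
def CantorConstr.cantorSet (c : CantorConstr) : Set ℝ :=
  Set.Icc (c.l 1) (c.r 1) \ ⋃ (i : ℕ) (_ : 1 ≤ i), Set.Ioo (c.r (2 * i)) (c.l (2 * i + 1))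

/-- The construction has density ratio at least `x`. -/
def CantorConstr.densityGE (c : CantorConstr) (x : ℝ) : Prop :=
  ∀ i : ℕ, 1 ≤ i →
    min (c.r (2 * i) - c.l (2 * i)) (c.r (2 * i + 1) - c.l (2 * i + 1)) ≥
      x * (c.l (2 * i + 1) - c.r (2 * i))

/-- The length of the gap `G_i`. -/
def CantorConstr.gapLen (c : CantorConstr) (i : ℕ) : ℝ := c.l (2 * i + 1) - c.r (2 * i)

/-- The construction is hole-decreasing. -/
def CantorConstr.holeDecr (c : CantorConstr) : Prop :=
  ∀ i : ℕ, 1 ≤ i → c.gapLen (2 * i) ≤ c.gapLen i ∧ c.gapLen (2 * i + 1) ≤ c.gapLen i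


lemma sum_Icc_set {n : ℕ} (a b : Fin n → ℝ) (hab : ∀ j, a j ≤ b j) :
    {s : ℝ | ∃ f : Fin n → ℝ, (∀ j, f j ∈ Set.Icc (a j) (b j)) ∧ s = ∑ j, f j} =
    Set.Icc (∑ j, a j) (∑ j, b j) := by
  ext s
  constructor
  · rintro ⟨f, hf, rfl⟩
    exact ⟨Finset.sum_le_sum fun j _ => (hf j).1, Finset.sum_le_sum fun j _ => (hf j).2⟩
  · rintro ⟨h1, h2⟩
    set D := ∑ j, (b j - a j) with hD
    have hD0 : 0 ≤ D := Finset.sum_nonneg fun j _ => sub_nonneg.2 (hab j)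
    have hDs : D = ∑ j, b j - ∑ j, a j := Finset.sum_sub_distrib b a
    set t := (s - ∑ j, a j) / D with ht
    have ht0 : 0 ≤ t := div_nonneg (by linarith) hD0
    have ht1 : t ≤ 1 := by
      rcases eq_or_lt_of_le hD0 with h | h
      · simp [ht, ← h]
      · rw [ht, div_le_one h, hDs]; linarith
    refine ⟨fun j => a j + t * (b j - a j), fun j => ⟨?_, ?_⟩, ?_⟩
    · show a j ≤ a j + t * (b j - a j)
      nlinarith [mul_nonneg ht0 (sub_nonneg.2 (hab j))]
    · show a j + t * (b j - a j) ≤ b j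
      nlinarith [sub_nonneg.2 (hab j)]
    · rw [Finset.sum_add_distrib, ← Finset.mul_sum, ← hD]
      rcases eq_or_lt_of_le hD0 with h | h
      · have hs : s = ∑ j, a j := le_antisymm (by rw [hDs] at h; linarith) h1
        rw [← h, mul_zero, add_zero]; exact hs
      · rw [ht, div_mul_cancel₀ _ (ne_of_gt h)]; ring

theorem comparable_sum_splits (n : ℕ) (hn : 2 ≤ n)
    (c : Fin n → CantorConstr) (x : Fin n → ℝ) (idx : Fin n → ℕ)
    (hx : ∀ j, 0 < x j)
    (hd : ∀ j, (c j).densityGE (x j))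
    (h1 : (∑ j, x j / (x j + 1)) ≥ 1)
    (hidx : ∀ j, 1 ≤ idx j)
    (hcomp : ∀ j k, (c j).r (idx j) - (c j).l (idx j) ≥
      x j / (x j + 1) * ((x k + 1) * ((c k).gapLen (idx k)))) :
    ∀ k : Fin n,
      {s : ℝ | ∃ f : Fin n → ℝ,
        (∀ j, f j ∈ Set.Icc ((c j).l (idx j)) ((c j).r (idx j))) ∧ s = ∑ j, f j} =
      {s : ℝ | ∃ f : Fin n → ℝ,
        (∀ j, j ≠ k → f j ∈ Set.Icc ((c j).l (idx j)) ((c j).r (idx j))) ∧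
        f k ∈ Set.Icc ((c k).l (2 * idx k)) ((c k).r (2 * idx k)) ∧ s = ∑ j, f j} ∪
      {s : ℝ | ∃ f : Fin n → ℝ,
        (∀ j, j ≠ k → f j ∈ Set.Icc ((c j).l (idx j)) ((c j).r (idx j))) ∧
        f k ∈ Set.Icc ((c k).l (2 * idx k + 1)) ((c k).r (2 * idx k + 1)) ∧ s = ∑ j, f j} := by
  intro k
  classical
  set a : Fin n → ℝ := fun j => (c j).l (idx j) with ha
  set b : Fin n → ℝ := fun j => (c j).r (idx j) with hb
  have hab : ∀ j, a j ≤ b j := fun j => ((c j).lt _ (hidx j)).le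
  have hk1 : 1 ≤ idx k := hidx k
  have hk2 : 1 ≤ 2 * idx k := by omega
  set L2 := (c k).l (2 * idx k) with hL2
  set R2 := (c k).r (2 * idx k) with hR2
  set L3 := (c k).l (2 * idx k + 1) with hL3
  set R3 := (c k).r (2 * idx k + 1) with hR3
  have haL2 : L2 = a k := (c k).left_eq (idx k) hk1
  have hbR3 : R3 = b k := (c k).right_eq (idx k) hk1
  have hL2R2 : L2 < R2 := (c k).lt _ hk2
  have hL3R3 : L3 < R3 := (c k).lt _ (by omega)
  have hgap : R2 < L3 := (c k).gap_lt (idx k) hk1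
  set b2 : Fin n → ℝ := fun j => if j = k then R2 else b j with hb2
  set a3 : Fin n → ℝ := fun j => if j = k then L3 else a j with ha3
  have hab2 : ∀ j, a j ≤ b2 j := by
    intro j; by_cases hj : j = k
    · subst hj; simp [hb2]; linarith
    · simp [hb2, hj]; exact hab j
  have ha3b : ∀ j, a3 j ≤ b j := by
    intro j; by_cases hj : j = k
    · subst hj; simp [ha3]; linarith
    · simp [ha3, hj]; exact hab j
  -- rewrite set 2
  have e2 : {s : ℝ | ∃ f : Fin n → ℝ,
        (∀ j, j ≠ k → f j ∈ Set.Icc ((c j).l (idx j)) ((c j).r (idx j))) ∧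
        f k ∈ Set.Icc L2 R2 ∧ s = ∑ j, f j} =
      {s : ℝ | ∃ f : Fin n → ℝ, (∀ j, f j ∈ Set.Icc (a j) (b2 j)) ∧ s = ∑ j, f j} := by
    ext s
    constructor
    · rintro ⟨f, h1', h2', rfl⟩
      refine ⟨f, fun j => ?_, rfl⟩
      by_cases hj : j = k
      · subst hj; simpa [hb2, ← haL2] using h2'
      · simpa [hb2, hj] using h1' j hj
    · rintro ⟨f, h1', rfl⟩
      refine ⟨f, fun j hj => by simpa [hb2, hj] using h1' j, ?_, rfl⟩
      have := h1' k; simpa [hb2, haL2] using this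
  have e3 : {s : ℝ | ∃ f : Fin n → ℝ,
        (∀ j, j ≠ k → f j ∈ Set.Icc ((c j).l (idx j)) ((c j).r (idx j))) ∧
        f k ∈ Set.Icc L3 R3 ∧ s = ∑ j, f j} =
      {s : ℝ | ∃ f : Fin n → ℝ, (∀ j, f j ∈ Set.Icc (a3 j) (b j)) ∧ s = ∑ j, f j} := by
    ext s
    constructor
    · rintro ⟨f, h1', h2', rfl⟩
      refine ⟨f, fun j => ?_, rfl⟩
      by_cases hj : j = k
      · subst hj; simpa [ha3, ← hbR3] using h2'
      · simpa [ha3, hj] using h1' j hj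
    · rintro ⟨f, h1', rfl⟩
      refine ⟨f, fun j hj => by simpa [ha3, hj] using h1' j, ?_, rfl⟩
      have := h1' k; simpa [ha3, hbR3] using this
  rw [e2, e3, sum_Icc_set a b hab, sum_Icc_set a b2 hab2, sum_Icc_set a3 b ha3b]
  -- sum computations
  have hsb2 : ∑ j, b2 j = R2 + ∑ j ∈ Finset.univ.erase k, b j := by
    rw [← Finset.add_sum_erase _ b2 (Finset.mem_univ k)]
    simp only [hb2, if_pos rfl]
    congr 1
    exact Finset.sum_congr rfl fun j hj => by simp [(Finset.mem_erase.1 hj).1]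
  have hsa3 : ∑ j, a3 j = L3 + ∑ j ∈ Finset.univ.erase k, a j := by
    rw [← Finset.add_sum_erase _ a3 (Finset.mem_univ k)]
    simp only [ha3, if_pos rfl]
    congr 1
    exact Finset.sum_congr rfl fun j hj => by simp [(Finset.mem_erase.1 hj).1]
  have hsa : ∑ j, a j = a k + ∑ j ∈ Finset.univ.erase k, a j :=
    (Finset.add_sum_erase _ a (Finset.mem_univ k)).symm
  have hsb : ∑ j, b j = b k + ∑ j ∈ Finset.univ.erase k, b j :=
    (Finset.add_sum_erase _ b (Finset.mem_univ k)).symm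
  set E := ∑ j ∈ Finset.univ.erase k, a j
  set F := ∑ j ∈ Finset.univ.erase k, b j
  -- key inequality: L3 - R2 ≤ F - E
  have hxk : 0 < x k + 1 := by linarith [hx k]
  have hgapeq : (c k).gapLen (idx k) = L3 - R2 := rfl
  have hgapnn : (0:ℝ) ≤ L3 - R2 := by linarith
  have hratio : ∑ j ∈ Finset.univ.erase k, x j / (x j + 1) ≥ 1 / (x k + 1) := by
    have he : ∑ j ∈ Finset.univ.erase k, x j / (x j + 1)
        = (∑ j, x j / (x j + 1)) - x k / (x k + 1) :=
      Finset.sum_erase_eq_sub (Finset.mem_univ k)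
    have hx' : x k / (x k + 1) = 1 - 1 / (x k + 1) := by field_simp; ring
    rw [he, hx']; linarith
  have key : L3 - R2 ≤ F - E := by
    have hstep : ∀ j ∈ Finset.univ.erase k,
        x j / (x j + 1) * ((x k + 1) * (L3 - R2)) ≤ b j - a j := by
      intro j _
      have := hcomp j k
      rw [hgapeq] at this
      exact this
    have h2' : ∑ j ∈ Finset.univ.erase k, (x j / (x j + 1) * ((x k + 1) * (L3 - R2)))
        ≤ ∑ j ∈ Finset.univ.erase k, (b j - a j) := Finset.sum_le_sum hstep
    rw [Finset.sum_sub_distrib] at h2'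
    have h3' : (1 / (x k + 1)) * ((x k + 1) * (L3 - R2))
        ≤ (∑ j ∈ Finset.univ.erase k, x j / (x j + 1)) * ((x k + 1) * (L3 - R2)) :=
      mul_le_mul_of_nonneg_right hratio (by positivity)
    rw [← Finset.sum_mul] at h2'
    have h4' : (1 / (x k + 1)) * ((x k + 1) * (L3 - R2)) = L3 - R2 := by
      field_simp
    linarith
  -- final interval union
  have haL2' : a k = L2 := haL2.symm
  have hbR3' : b k = R3 := hbR3.symm
  ext s
  simp only [Set.mem_Icc, Set.mem_union, hsb2, hsa3, hsa, hsb, haL2', hbR3']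
  constructor
  · rintro ⟨hl, hr⟩
    by_cases hs : s ≤ R2 + F
    · exact Or.inl ⟨hl, hs⟩
    · exact Or.inr ⟨by linarith, hr⟩
  · rintro (⟨hl, hr⟩ | ⟨hl, hr⟩)
    · exact ⟨hl, by linarith⟩
    · exact ⟨by linarith, hr⟩
end

section
/- Let x be an irrational real number with NICF digits a_0, a_1, a_2, …. Then for every i ≥ 1: |a_i| ≥ 2; if a_i = 2 then a_{i+1} ≥ 2; and if a_i = −2 then a_{i+1} ≤ −2. -/
open Filter Pointwise

/-- NICF iterates: `x₀ = x`, `x_{i+1} = 1/(x_i - ⌊x_i⌉)`, with `⌊t⌉ = round t = ⌊t + 1/2⌋`. -/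
noncomputable def nicfX (x : ℝ) : ℕ → ℝ
  | 0 => x
  | n + 1 => 1 / (nicfX x n - round (nicfX x n))

/-- The `i`-th NICF digit of `x`. -/
noncomputable def nicfDigit (x : ℝ) (i : ℕ) : ℤ := round (nicfX x i)

/-- The `i`-th NICF digit is genuinely defined: the algorithm has not terminated before
step `i` (i.e. `x_m ≠ a_m` for all `m < i`). -/
def nicfDefined (x : ℝ) (i : ℕ) : Prop :=
  ∀ m, m < i → nicfX x m ≠ (nicfDigit x m : ℝ)

/-- `NICFset r`: the reals all of whose NICF digits `a_i` with `i ≥ 1` satisfy `|a_i| ≤ r`. -/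
def NICFset (r : ℤ) : Set ℝ :=
  {x | ∀ i : ℕ, 1 ≤ i → nicfDefined x i → |nicfDigit x i| ≤ r}

lemma nicfX_irrational (x : ℝ) (hx : Irrational x) : ∀ n, Irrational (nicfX x n) := by
  intro n
  induction n with
  | zero => exact hx
  | succ n ih =>
    have h := (ih.sub_intCast (round (nicfX x n))).inv
    simpa [nicfX, one_div] using h

lemma nicfX_abs_gt (x : ℝ) (hx : Irrational x) (n : ℕ) : 2 < |nicfX x (n + 1)| := by
  set y := nicfX x n with hy
  have hirr := nicfX_irrational x hx n
  have hf : Irrational (y - round y) := hirr.sub_intCast _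
  have hne : y - round y ≠ 0 := by
    intro h
    exact hf.ne_int 0 (by push_cast; linarith [sub_eq_zero.mp h ▸ h])
  have habs : |y - round y| ≤ 1 / 2 := abs_sub_round y
  have hne2 : |y - round y| ≠ 1 / 2 := by
    intro h
    rcases abs_eq (by norm_num : (0:ℝ) ≤ 1/2) |>.mp h with h' | h'
    · exact hf ⟨(1:ℚ)/2, by push_cast; linarith⟩
    · exact hf ⟨-(1:ℚ)/2, by push_cast; linarith⟩
  have hlt : |y - round y| < 1 / 2 := lt_of_le_of_ne habs hne2
  have hpos : 0 < |y - round y| := abs_pos.mpr hne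
  have : nicfX x (n + 1) = 1 / (y - round y) := by simp [nicfX, hy]
  rw [this, abs_div, abs_one]
  rw [lt_div_iff₀ hpos]
  linarith

theorem nicf_digit_rules (x : ℝ) (hx : Irrational x) :
    ∀ i : ℕ, 1 ≤ i →
      2 ≤ |nicfDigit x i| ∧
      (nicfDigit x i = 2 → 2 ≤ nicfDigit x (i + 1)) ∧
      (nicfDigit x i = -2 → nicfDigit x (i + 1) ≤ -2) := by
  intro i hi
  obtain ⟨n, rfl⟩ : ∃ n, i = n + 1 := ⟨i - 1, by omega⟩
  set t := nicfX x (n + 1) with ht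
  have htabs : 2 < |t| := nicfX_abs_gt x hx n
  have hround : |t - round t| ≤ 1 / 2 := abs_sub_round t
  have hirr := nicfX_irrational x hx (n + 1)
  refine ⟨?_, ?_, ?_⟩
  · by_contra h
    push_neg at h
    have h1 : |nicfDigit x (n+1)| ≤ 1 := by omega
    have h2 : (|(round t : ℤ)| : ℝ) ≤ 1 := by exact_mod_cast h1
    rw [← Int.cast_abs] at h2
    have := abs_sub_abs_le_abs_sub t (round t : ℝ)
    have : |t| ≤ |(round t : ℝ)| + 1/2 := by
      have := abs_sub_round t
      calc |t| ≤ |(round t:ℝ)| + |t - round t| := by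
              have := abs_sub_abs_le_abs_sub t ((round t : ℝ))
              linarith [abs_nonneg (t - round t)]
           _ ≤ |(round t:ℝ)| + 1/2 := by linarith
    rw [← Int.cast_abs] at this
    linarith
  · intro h2
    have hr : round t = 2 := h2
    have ht2 : (2:ℝ) < t := by
      have h1 : t - (round t : ℝ) ≥ -(1/2) := neg_le_of_abs_le hround
      have h1' : t ≥ 3/2 := by rw [hr] at h1; push_cast at h1; linarith
      have : |t| = t := abs_of_pos (by linarith)
      linarith [this ▸ htabs]
    have ht5 : t < 5/2 := by
      have h1 : t - (round t : ℝ) ≤ 1/2 := le_of_abs_le hround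
      have h1' : t ≤ 5/2 := by rw [hr] at h1; push_cast at h1; linarith
      have hne : t ≠ 5/2 := fun h => hirr ⟨5/2, by rw [← ht, h]; norm_num⟩
      exact lt_of_le_of_ne h1' hne
    have hnext : nicfX x (n + 2) = 1 / (t - 2) := by
      show (1 : ℝ) / (nicfX x (n+1) - round (nicfX x (n+1))) = 1 / (t - 2)
      rw [← ht, hr]; norm_num
    have hgt : 2 < nicfX x (n + 2) := by
      rw [hnext]
      rw [lt_div_iff₀ (by linarith)]
      linarith
    have : (1:ℝ) < round (nicfX x (n+2)) := by
      have := abs_sub_round (nicfX x (n+2))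
      have h1 : nicfX x (n+2) - (round (nicfX x (n+2)) : ℝ) ≤ 1/2 := le_of_abs_le this
      linarith
    have : (1:ℤ) < round (nicfX x (n+2)) := by exact_mod_cast this
    show (2:ℤ) ≤ round (nicfX x (n+2))
    omega
  · intro h2
    have hr : round t = -2 := h2
    have ht2 : t < -2 := by
      have h1 : t - (round t : ℝ) ≤ 1/2 := le_of_abs_le hround
      have h1' : t ≤ -3/2 := by rw [hr] at h1; push_cast at h1; linarith
      have : |t| = -t := abs_of_neg (by linarith)
      linarith [this ▸ htabs]
    have ht5 : -5/2 < t := by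
      have h1 : t - (round t : ℝ) ≥ -(1/2) := neg_le_of_abs_le hround
      have h1' : -5/2 ≤ t := by rw [hr] at h1; push_cast at h1; linarith
      have hne : t ≠ -5/2 := fun h => hirr ⟨-5/2, by rw [← ht, h]; norm_num⟩
      exact lt_of_le_of_ne h1' (Ne.symm hne)
    have hnext : nicfX x (n + 2) = 1 / (t + 2) := by
      show (1 : ℝ) / (nicfX x (n+1) - round (nicfX x (n+1))) = 1 / (t + 2)
      rw [← ht, hr]; push_cast; ring_nf
    have hgt : nicfX x (n + 2) < -2 := by
      rw [hnext]
      rw [div_lt_iff_of_neg (by linarith)]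
      linarith
    have : (round (nicfX x (n+2)) : ℝ) < -1 := by
      have := abs_sub_round (nicfX x (n+2))
      have h1 : -(1/2) ≤ nicfX x (n+2) - (round (nicfX x (n+2)) : ℝ) := neg_le_of_abs_le this
      linarith
    have : round (nicfX x (n+2)) < (-1:ℤ) := by exact_mod_cast this
    show round (nicfX x (n+2)) ≤ (-2:ℤ)
    omega
end

section
/- Let a : ℕ → ℤ be a sequence of integers such that for every i ≥ 1: |a_i| ≥ 2; if a_i = 2 then a_{i+1} ≥ 2; and if a_i = −2 then a_{i+1} ≤ −2. Then the finite continued fraction values c_n = a_0 + 1/(a_1 + 1/(⋯ + 1/a_n)) converge as n → ∞ to a real number x, and the NICF expansion of x is exactly the sequence (a_i): x is irrational and for every i ≥ 0 its NICF digit at index i equals a_i. -/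
open Filter Pointwise

/-- `cfTail a m i` is the finite continued fraction `a_i + 1/(a_{i+1} + 1/(⋯ + 1/a_{i+m}))`. -/
noncomputable def cfTail (a : ℕ → ℤ) : ℕ → ℕ → ℝ
  | 0, i => (a i : ℝ)
  | m + 1, i => (a i : ℝ) + 1 / cfTail a m (i + 1)

private lemma cfTail_succ (a : ℕ → ℤ) (m i : ℕ) :
    cfTail a (m + 1) i = (a i : ℝ) + 1 / cfTail a m (i + 1) := rfl

private lemma nicf_tail_bounds (a : ℕ → ℤ)
    (h : ∀ i : ℕ, 1 ≤ i →
      2 ≤ |a i| ∧ (a i = 2 → 2 ≤ a (i + 1)) ∧ (a i = -2 → a (i + 1) ≤ -2)) :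
    ∀ m i, 1 ≤ i →
      (2 ≤ a i → 2 ≤ cfTail a m i ∧ cfTail a m i ≤ (a i : ℝ) + 1 / 2) ∧
      (a i ≤ -2 → cfTail a m i ≤ -2 ∧ (a i : ℝ) - 1 / 2 ≤ cfTail a m i) := by
  intro m
  induction m with
  | zero =>
    intro i hi
    simp only [cfTail]
    constructor
    · intro h2
      have : (2 : ℝ) ≤ (a i : ℝ) := by exact_mod_cast h2
      constructor <;> linarith
    · intro h2
      have : (a i : ℝ) ≤ -2 := by exact_mod_cast h2
      constructor <;> linarith
  | succ m ih =>
    intro i hi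
    have hi1 : 1 ≤ i + 1 := by omega
    have hnext := ih (i + 1) hi1
    have htabs : 2 ≤ |cfTail a m (i + 1)| := by
      rcases le_abs.mp (h (i + 1) hi1).1 with h1 | h1
      · have := (hnext.1 h1).1
        exact le_trans this (le_abs_self _)
      · have := (hnext.2 (by omega)).1
        rw [le_abs]; right; linarith
    have hfr : |1 / cfTail a m (i + 1)| ≤ 1 / 2 := by
      rw [abs_div, abs_one, div_le_div_iff₀ (by linarith) (by norm_num)]
      linarith
    have hfr1 : -(1 / 2) ≤ 1 / cfTail a m (i + 1) := by linarith [(abs_le.mp hfr).1]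
    have hfr2 : 1 / cfTail a m (i + 1) ≤ 1 / 2 := (abs_le.mp hfr).2
    rw [cfTail_succ]
    constructor
    · intro h2
      have hai : (2 : ℝ) ≤ (a i : ℝ) := by exact_mod_cast h2
      refine ⟨?_, by linarith⟩
      rcases eq_or_lt_of_le h2 with heq | h3
      · have ha1 : 2 ≤ a (i + 1) := (h i hi).2.1 heq.symm
        have ht2 : 2 ≤ cfTail a m (i + 1) := (hnext.1 ha1).1
        have : 0 < 1 / cfTail a m (i + 1) := one_div_pos.mpr (by linarith)
        linarith
      · have : (3 : ℝ) ≤ (a i : ℝ) := by exact_mod_cast (by omega : (3 : ℤ) ≤ a i)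
        linarith
    · intro h2
      have hai : (a i : ℝ) ≤ -2 := by exact_mod_cast h2
      refine ⟨?_, by linarith⟩
      rcases eq_or_lt_of_le h2 with heq | h3
      · have ha1 : a (i + 1) ≤ -2 := (h i hi).2.2 heq
        have ht2 : cfTail a m (i + 1) ≤ -2 := (hnext.2 ha1).1
        have : 1 / cfTail a m (i + 1) < 0 := one_div_neg.mpr (by linarith)
        linarith
      · have : (a i : ℝ) ≤ -3 := by exact_mod_cast (by omega : a i ≤ -3)
        linarith

private lemma nicf_tail_abs (a : ℕ → ℤ)
    (h : ∀ i : ℕ, 1 ≤ i →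
      2 ≤ |a i| ∧ (a i = 2 → 2 ≤ a (i + 1)) ∧ (a i = -2 → a (i + 1) ≤ -2)) :
    ∀ m i, 1 ≤ i → 2 ≤ |cfTail a m i| := by
  intro m i hi
  have hb := nicf_tail_bounds a h m i hi
  rcases le_abs.mp (h i hi).1 with h1 | h1
  · exact le_trans ((hb.1 h1).1) (le_abs_self _)
  · have := (hb.2 (by omega)).1
    rw [le_abs]; right; linarith

private lemma nicf_diff (a : ℕ → ℤ)
    (h : ∀ i : ℕ, 1 ≤ i →
      2 ≤ |a i| ∧ (a i = 2 → 2 ≤ a (i + 1)) ∧ (a i = -2 → a (i + 1) ≤ -2)) :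
    ∀ m i, |cfTail a (m + 1) i - cfTail a m i| ≤ 1 / 2 * (1 / 4) ^ m := by
  intro m
  induction m with
  | zero =>
    intro i
    have h2 : (2 : ℝ) ≤ |(a (i + 1) : ℝ)| := by
      rw [← Int.cast_abs]
      exact_mod_cast (h (i + 1) (by omega)).1
    rw [cfTail_succ]
    show |(a i : ℝ) + 1 / cfTail a 0 (i + 1) - cfTail a 0 i| ≤ 1 / 2 * (1 / 4) ^ 0
    simp only [cfTail, pow_zero, mul_one]
    rw [add_sub_cancel_left, abs_div, abs_one,
      div_le_div_iff₀ (by linarith) (by norm_num)]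
    linarith
  | succ m ih =>
    intro i
    set T := cfTail a (m + 1) (i + 1) with hT_def
    set T' := cfTail a m (i + 1) with hT'_def
    have hT : 2 ≤ |T| := nicf_tail_abs a h (m + 1) (i + 1) (by omega)
    have hT' : 2 ≤ |T'| := nicf_tail_abs a h m (i + 1) (by omega)
    have hTne : T ≠ 0 := by intro h0; rw [h0] at hT; norm_num at hT
    have hT'ne : T' ≠ 0 := by intro h0; rw [h0] at hT'; norm_num at hT'
    have key : cfTail a (m + 1 + 1) i - cfTail a (m + 1) i = (T' - T) / (T * T') := by
      rw [cfTail_succ a (m + 1) i, cfTail_succ a m i, ← hT_def, ← hT'_def]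
      field_simp
      ring
    rw [key, abs_div, abs_mul]
    have hnum : |T' - T| ≤ 1 / 2 * (1 / 4) ^ m := by
      rw [abs_sub_comm]; exact ih (i + 1)
    calc |T' - T| / (|T| * |T'|) ≤ (1 / 2 * (1 / 4) ^ m) / 4 := by
          apply div_le_div₀ (by positivity) hnum (by norm_num)
          nlinarith [abs_nonneg T, abs_nonneg T']
      _ = 1 / 2 * (1 / 4) ^ (m + 1) := by ring

theorem nicf_expansion_of_valid_digits (a : ℕ → ℤ)
    (h : ∀ i : ℕ, 1 ≤ i →
      2 ≤ |a i| ∧ (a i = 2 → 2 ≤ a (i + 1)) ∧ (a i = -2 → a (i + 1) ≤ -2)) :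
    ∃ x : ℝ, Filter.Tendsto (fun n => cfTail a n 0) Filter.atTop (nhds x) ∧
      Irrational x ∧ ∀ i : ℕ, nicfDigit x i = a i := by
  have hy' : ∀ i, ∃ l, Tendsto (fun m => cfTail a m i) atTop (nhds l) := by
    intro i
    apply cauchySeq_tendsto_of_complete
    apply cauchySeq_of_le_geometric (1 / 4) (1 / 2) (by norm_num)
    intro n
    rw [Real.dist_eq, abs_sub_comm]
    exact nicf_diff a h n i
  choose y hy using hy'
  have hyb : ∀ i, 1 ≤ i →
      (2 ≤ a i → 2 ≤ y i ∧ y i ≤ (a i : ℝ) + 1 / 2) ∧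
      (a i ≤ -2 → y i ≤ -2 ∧ (a i : ℝ) - 1 / 2 ≤ y i) := by
    intro i hi
    constructor
    · intro h2
      have hb := fun m => (nicf_tail_bounds a h m i hi).1 h2
      exact ⟨ge_of_tendsto (hy i) (Eventually.of_forall fun m => (hb m).1),
             le_of_tendsto (hy i) (Eventually.of_forall fun m => (hb m).2)⟩
    · intro h2
      have hb := fun m => (nicf_tail_bounds a h m i hi).2 h2
      exact ⟨le_of_tendsto (hy i) (Eventually.of_forall fun m => (hb m).1),
             ge_of_tendsto (hy i) (Eventually.of_forall fun m => (hb m).2)⟩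
  have hyabs : ∀ i, 1 ≤ i → 2 ≤ |y i| := by
    intro i hi
    rcases le_abs.mp (h i hi).1 with h1 | h1
    · exact le_trans ((hyb i hi).1 h1).1 (le_abs_self _)
    · have := ((hyb i hi).2 (by omega)).1
      rw [le_abs]; right; linarith
  have hyne : ∀ i, 1 ≤ i → y i ≠ 0 := by
    intro i hi h0
    have := hyabs i hi
    rw [h0] at this
    norm_num at this
  have hrec : ∀ i, y i = (a i : ℝ) + 1 / y (i + 1) := by
    intro i
    have h1 : Tendsto (fun m => cfTail a (m + 1) i) atTop (nhds (y i)) :=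
      (hy i).comp (tendsto_add_atTop_nat 1)
    have h2 : Tendsto (fun m => (a i : ℝ) + 1 / cfTail a m (i + 1)) atTop
        (nhds ((a i : ℝ) + 1 / y (i + 1))) :=
      Tendsto.const_add _ (tendsto_const_nhds.div (hy (i + 1)) (hyne (i + 1) (by omega)))
    have h3 : (fun m => (a i : ℝ) + 1 / cfTail a m (i + 1)) =
        fun m => cfTail a (m + 1) i := by
      funext m; rw [cfTail_succ]
    rw [h3] at h2
    exact tendsto_nhds_unique h1 h2
  have hstrict : ∀ i, 1 ≤ i → (2 ≤ a i → 2 < y i) ∧ (a i ≤ -2 → y i ≤ -2) := by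
    intro i hi
    refine ⟨?_, fun hn => ((hyb i hi).2 hn).1⟩
    intro h2
    rcases eq_or_lt_of_le h2 with heq | h3
    · have ha1 : 2 ≤ a (i + 1) := (h i hi).2.1 heq.symm
      have ht2 : 2 ≤ y (i + 1) := ((hyb (i + 1) (by omega)).1 ha1).1
      have hpos : 0 < 1 / y (i + 1) := one_div_pos.mpr (by linarith)
      have hai : (a i : ℝ) = 2 := by exact_mod_cast heq.symm
      have := hrec i
      rw [hai] at this
      linarith
    · have hai : (3 : ℝ) ≤ (a i : ℝ) := by exact_mod_cast (by omega : (3 : ℤ) ≤ a i)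
      have habs := hyabs (i + 1) (by omega)
      have hf : -(1 / 2) ≤ 1 / y (i + 1) := by
        have : |1 / y (i + 1)| ≤ 1 / 2 := by
          rw [abs_div, abs_one, div_le_div_iff₀ (by linarith) (by norm_num)]
          linarith
        linarith [(abs_le.mp this).1]
      linarith [hrec i]
  have hfrac : ∀ i, 1 ≤ i → -(1 / 2) ≤ 1 / y i ∧ 1 / y i < 1 / 2 ∧ 1 / y i ≠ 0 := by
    intro i hi
    rcases le_abs.mp (h i hi).1 with h1 | h1
    · have h2 : 2 < y i := (hstrict i hi).1 h1
      have hp : 0 < 1 / y i := one_div_pos.mpr (by linarith)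
      refine ⟨by linarith, ?_, ne_of_gt hp⟩
      rw [div_lt_div_iff₀ (by linarith) (by norm_num)]
      linarith
    · have h2 : y i ≤ -2 := (hstrict i hi).2 (by omega)
      have hn : 1 / y i < 0 := one_div_neg.mpr (by linarith)
      refine ⟨?_, by linarith, ne_of_lt hn⟩
      rw [le_div_iff_of_neg (by linarith : y i < 0)]
      linarith
  have hround : ∀ i, round (y i) = a i := by
    intro i
    have hf := hfrac (i + 1) (by omega)
    rw [hrec i, add_comm, round_add_intCast]
    have h0 : round (1 / y (i + 1)) = 0 := round_eq_zero_iff.mpr ⟨hf.1, hf.2.1⟩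
    rw [h0, zero_add]
  have hX : ∀ i, nicfX (y 0) i = y i := by
    intro i
    induction i with
    | zero => rfl
    | succ i ih =>
      show 1 / (nicfX (y 0) i - round (nicfX (y 0) i)) = y (i + 1)
      rw [ih, hround i]
      have hsub : y i - (a i : ℝ) = 1 / y (i + 1) := by linarith [hrec i]
      rw [hsub, one_div_one_div]
  refine ⟨y 0, hy 0, ?_, fun i => by
    show round (nicfX (y 0) i) = a i
    rw [hX i, hround i]⟩
  rintro ⟨q, hq⟩
  set f : ℚ → ℚ := fun r => 1 / (r - round r) with hf_def
  set g : ℕ → ℚ := fun n => f^[n] q with hg_def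
  have hgy : ∀ n, ((g n : ℚ) : ℝ) = y n := by
    intro n
    induction n with
    | zero => simpa [hg_def] using hq
    | succ n ih =>
      have hstep : g (n + 1) = f (g n) := Function.iterate_succ_apply' f n q
      have hr : round (g n) = a n := by
        have hc := Rat.round_cast (α := ℝ) (g n)
        rw [ih, hround n] at hc
        exact hc.symm
      rw [hstep, hf_def]
      push_cast [hr]
      rw [ih]
      have hsub : y n - (a n : ℝ) = 1 / y (n + 1) := by linarith [hrec n]
      rw [hsub, one_div_one_div]
  have hr : ∀ n, round (g n) = a n := by
    intro n
    have hc := Rat.round_cast (α := ℝ) (g n)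
    rw [hgy n, hround n] at hc
    exact hc.symm
  have hden : ∀ n, (g (n + 1)).den < (g n).den := by
    intro n
    set s : ℚ := g n - round (g n) with hs_def
    have hstep : g (n + 1) = s⁻¹ := by
      have h1 : g (n + 1) = f (g n) := Function.iterate_succ_apply' f n q
      rw [h1]
      show 1 / (g n - round (g n)) = s⁻¹
      rw [hs_def, one_div]
    have hscast : (s : ℝ) = 1 / y (n + 1) := by
      have h1 : ((s : ℚ) : ℝ) = ((g n : ℚ) : ℝ) - ((round (g n) : ℤ) : ℝ) := by
        rw [hs_def]; push_cast; ring
      rw [h1, hgy n, hr n]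
      linarith [hrec n]
    have hfr := hfrac (n + 1) (by omega)
    have hs_ne : s ≠ 0 := by
      intro h0
      rw [h0] at hscast
      exact hfr.2.2 (by exact_mod_cast hscast.symm)
    have hs_half : |s| ≤ 1 / 2 := by
      have h1 : |(s : ℝ)| ≤ 1 / 2 := by
        rw [hscast, abs_le]
        exact ⟨hfr.1, le_of_lt hfr.2.1⟩
      rw [← Rat.cast_abs, show ((1:ℝ)/2) = ((1/2 : ℚ) : ℝ) by norm_num] at h1
      exact_mod_cast h1
    have hsden : s.den ≤ (g n).den := by
      have h1 : s = g n + ((-(round (g n)) : ℤ) : ℚ) := by push_cast; ring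
      have h2 := Rat.add_den_dvd (g n) ((-(round (g n)) : ℤ) : ℚ)
      rw [← h1, Rat.den_intCast, mul_one] at h2
      exact Nat.le_of_dvd (g n).pos h2
    have hnum_lt : s.num.natAbs < s.den := by
      have hden_pos : (0 : ℚ) < (s.den : ℚ) := by exact_mod_cast s.pos
      have h3 : (s.num : ℚ) = s * s.den := by
        have := Rat.num_div_den s
        rw [div_eq_iff (ne_of_gt hden_pos)] at this
        exact this
      have h4 : ((s.num.natAbs : ℚ)) = |s| * s.den := by
        rw [Nat.cast_natAbs, Int.cast_abs, h3, abs_mul, abs_of_pos hden_pos]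
      have h5 : ((s.num.natAbs : ℚ)) < (s.den : ℚ) := by
        rw [h4]
        nlinarith [hden_pos]
      exact_mod_cast h5
    have hinv : (g (n + 1)).den ≤ s.num.natAbs := by
      have h3 : ((s⁻¹).den : ℤ) ∣ s.num := by
        rw [Rat.inv_def]
        exact Rat.den_dvd _ _
      have h4 : (s⁻¹).den ∣ s.num.natAbs := Int.natCast_dvd_natCast.mp (Int.dvd_natAbs.mpr h3)
      rw [hstep]
      exact Nat.le_of_dvd (Int.natAbs_pos.mpr (Rat.num_ne_zero.mpr hs_ne)) h4
    omega
  have hmono : ∀ n, (g n).den + n ≤ (g 0).den := by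
    intro n
    induction n with
    | zero => simp
    | succ n ih =>
      have := hden n
      omega
  have h1 := hmono ((g 0).den)
  have h2 := (g ((g 0).den)).pos
  omega
end
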